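/- Let X be a Banach space and let C ⊆ X be a weakly compact, convex set having the Opial property. Suppose T : C → C is α-nonexpansive for some multi-index α = (α₁, …, α_{n₀}) (with α₁ > 0, α_{n₀} > 0, α_j ≥ 0 for all j, and α₁ + ⋯ + α_{n₀} = 1), and T is asymptotically regular at some x ∈ C. Then for every y in the weak ω-limit set ω_w(x) of the orbit (Tⁿx)ₙ, the limit limₙ ‖Tⁿx − y‖ exists. -/

import Mathlib

open Filter Topology

/-- A sequence `u` converges weakly to `y` in a normed space. -/
def WeakConvSeq {X : Type*} [NormedAddCommGroup X] [NormedSpace ℝ X]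
    (u : ℕ → X) (y : X) : Prop :=
  ∀ f : X →L[ℝ] ℝ, Filter.Tendsto (fun n => f (u n)) Filter.atTop (nhds (f y))

/-- A subset `C` has the Opial property. -/
def OpialSet {X : Type*} [NormedAddCommGroup X] [NormedSpace ℝ X] (C : Set X) : Prop :=
  ∀ (u : ℕ → X) (u₀ : X), (∀ n, u n ∈ C) → WeakConvSeq u u₀ →
    ∀ v : X, v ≠ u₀ →
      Filter.liminf (fun n => ‖u n - u₀‖) Filter.atTop <
        Filter.liminf (fun n => ‖u n - v‖) Filter.atTop

/-- The weak ω-limit set of the orbit of `x` under `T`. -/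
def omegaW {X : Type*} [NormedAddCommGroup X] [NormedSpace ℝ X]
    (T : X → X) (C : Set X) (x : X) : Set X :=
  {y | y ∈ C ∧ ∃ φ : ℕ → ℕ, StrictMono φ ∧ WeakConvSeq (fun k => T^[φ k] x) y}

/-- A weakly convergent sequence is norm bounded (Banach–Steinhaus). -/
lemma weakConvSeq_bounded {X : Type*} [NormedAddCommGroup X] [NormedSpace ℝ X]
    {u : ℕ → X} {y : X} (h : WeakConvSeq u y) : ∃ M : ℝ, ∀ k, ‖u k‖ ≤ M := by
  set g : ℕ → StrongDual ℝ X →L[ℝ] ℝ :=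
    fun k => NormedSpace.inclusionInDoubleDual ℝ X (u k) with hg
  have hpt : ∀ f : StrongDual ℝ X, ∃ C, ∀ k, ‖g k f‖ ≤ C := by
    intro f
    have ht : Tendsto (fun k => ‖f (u k)‖) atTop (𝓝 ‖f y‖) := (h f).norm
    obtain ⟨C, hC⟩ := ht.bddAbove_range
    exact ⟨C, fun k => by
      simpa [hg, NormedSpace.dual_def] using hC (Set.mem_range_self k)⟩
  obtain ⟨M, hM⟩ := banach_steinhaus hpt
  refine ⟨max M 0, fun k => ?_⟩
  apply NormedSpace.norm_le_dual_bound ℝ (u k) (le_max_right _ _)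
  intro f
  calc ‖f (u k)‖ = ‖g k f‖ := by rw [hg, NormedSpace.dual_def]
    _ ≤ ‖g k‖ * ‖f‖ := (g k).le_opNorm f
    _ ≤ max M 0 * ‖f‖ :=
        mul_le_mul_of_nonneg_right ((hM k).trans (le_max_left _ _)) (norm_nonneg f)

/-- Superadditivity of liminf over finite sums of nonnegative bounded sequences. -/
lemma sum_liminf_le_liminf_sum {ι : Type*} (s : Finset ι) (f : ι → ℕ → ℝ)
    (h0 : ∀ i k, 0 ≤ f i k) (hB : ∀ i, ∃ B, ∀ k, f i k ≤ B) :
    (∃ B, ∀ k, ∑ i ∈ s, f i k ≤ B) ∧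
      ∑ i ∈ s, Filter.liminf (fun k => f i k) Filter.atTop ≤
        Filter.liminf (fun k => ∑ i ∈ s, f i k) Filter.atTop := by
  classical
  induction s using Finset.induction_on with
  | empty => exact ⟨⟨0, by simp⟩, by simp [Filter.liminf_const]⟩
  | @insert a s ha ih =>
    obtain ⟨⟨B, hBs⟩, hle⟩ := ih
    obtain ⟨Ba, hBa⟩ := hB a
    have hs0 : ∀ k, (0:ℝ) ≤ ∑ i ∈ s, f i k :=
      fun k => Finset.sum_nonneg fun i _ => h0 i k
    refine ⟨⟨Ba + B, fun k => ?_⟩, ?_⟩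
    · rw [Finset.sum_insert ha]; exact add_le_add (hBa k) (hBs k)
    · have key : Filter.liminf (fun k => f a k) Filter.atTop +
          Filter.liminf (fun k => ∑ i ∈ s, f i k) Filter.atTop ≤
          Filter.liminf ((fun k => f a k) + (fun k => ∑ i ∈ s, f i k)) Filter.atTop :=
        le_liminf_add (isBoundedUnder_of ⟨0, fun k => h0 a k⟩)
          (isBoundedUnder_of ⟨Ba, hBa⟩)
          (isBoundedUnder_of ⟨0, hs0⟩)
          ((isBoundedUnder_of ⟨B, hBs⟩ :
            Filter.IsBoundedUnder (· ≤ ·) Filter.atTop _).isCoboundedUnder_ge)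
      have heq : ((fun k => f a k) + (fun k => ∑ i ∈ s, f i k)) =
          fun k => ∑ i ∈ insert a s, f i k := by
        funext k; simp [Finset.sum_insert ha]
      rw [heq] at key
      rw [Finset.sum_insert ha]
      exact le_trans (add_le_add_right hle _) key

theorem norm_limit_exists_of_mean_nonexpansive
    {X : Type*} [NormedAddCommGroup X] [NormedSpace ℝ X] [CompleteSpace X]
    (C : Set X) (hC_wcompact : IsCompact (toWeakSpace ℝ X '' C))
    (hC_convex : Convex ℝ C) (hC_opial : OpialSet C)
    (T : X → X) (hT : Set.MapsTo T C C)
    (n₀ : ℕ) (hn₀ : 0 < n₀) (α : Fin n₀ → ℝ)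
    (hα_nonneg : ∀ j, 0 ≤ α j)
    (hα_first : 0 < α ⟨0, hn₀⟩)
    (hα_last : 0 < α ⟨n₀ - 1, by omega⟩)
    (hα_sum : ∑ j, α j = 1)
    (hne : ∀ x ∈ C, ∀ y ∈ C,
      ∑ j : Fin n₀, α j * ‖T^[(j : ℕ) + 1] x - T^[(j : ℕ) + 1] y‖ ≤ ‖x - y‖)
    (x : X) (hx : x ∈ C)
    (har : Filter.Tendsto (fun n => ‖T^[n] x - T^[n + 1] x‖) Filter.atTop (nhds 0)) :
    ∀ y ∈ omegaW T C x,
      ∃ L : ℝ, Filter.Tendsto (fun n => ‖T^[n] x - y‖) Filter.atTop (nhds L) := by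
  classical
  intro y hy
  obtain ⟨hyC, φ, hφ, hconv⟩ := hy
  -- the orbit stays in C
  have hmem : ∀ n, T^[n] x ∈ C := fun n => hT.iterate n hx
  -- iterate differences tend to zero
  have hD : ∀ p : ℕ, Tendsto (fun m => ‖T^[m + p] x - T^[m] x‖) atTop (𝓝 0) := by
    intro p
    induction p with
    | zero => simpa using (tendsto_const_nhds : Tendsto (fun _ : ℕ => (0:ℝ)) atTop (𝓝 0))
    | succ p ih =>
      have hb : ∀ m, ‖T^[m + (p+1)] x - T^[m] x‖ ≤
          ‖T^[m + p] x - T^[m + p + 1] x‖ + ‖T^[m + p] x - T^[m] x‖ := by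
        intro m
        have he : T^[m + (p+1)] x - T^[m] x =
            -(T^[m + p] x - T^[m + p + 1] x) + (T^[m + p] x - T^[m] x) := by
          have h' : m + (p+1) = m + p + 1 := by omega
          rw [h']; abel
        rw [he]
        exact (norm_add_le _ _).trans (by rw [norm_neg])
      have h1 : Tendsto (fun m => ‖T^[m + p] x - T^[m + p + 1] x‖) atTop (𝓝 0) := by
        have := har.comp (tendsto_add_atTop_nat p)
        exact this
      have h2 := h1.add ih
      rw [add_zero] at h2
      exact squeeze_zero (fun m => norm_nonneg _) hb h2
  set u : ℕ → X := fun k => T^[φ k] x with hu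
  have huC : ∀ k, u k ∈ C := fun k => hmem (φ k)
  obtain ⟨M, hM⟩ := weakConvSeq_bounded hconv
  have hwB : ∀ v : X, ∀ k, ‖u k - v‖ ≤ M + ‖v‖ := fun v k =>
    (norm_sub_le _ _).trans (add_le_add_left (hM k) _)
  -- Step 1: y is a fixed point of T
  have hfixed : T y = y := by
    by_contra hTy
    set r : X → ℝ := fun v => Filter.liminf (fun k => ‖u k - v‖) Filter.atTop with hr
    have hopial : ∀ v : X, v ≠ y → r y < r v := fun v hv => hC_opial u y huC hconv v hv
    have hge : ∀ j : Fin n₀, r y ≤ r (T^[(j:ℕ)+1] y) := by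
      intro j
      by_cases hj : T^[(j:ℕ)+1] y = y
      · rw [hj]
      · exact (hopial _ hj).le
    have h0lt : r y < r (T^[((⟨0, hn₀⟩ : Fin n₀) : ℕ) + 1] y) := by
      apply hopial
      simpa using hTy
    -- the correction term
    set c : ℕ → ℝ := fun k => ∑ j : Fin n₀, α j * ‖T^[(j:ℕ)+1] (u k) - u k‖ with hcdef
    have hterm : ∀ j : Fin n₀, Tendsto (fun k => ‖T^[(j:ℕ)+1] (u k) - u k‖) atTop (𝓝 0) := by
      intro j
      have h1 := (hD ((j:ℕ)+1)).comp hφ.tendsto_atTop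
      have heq : (fun k => ‖T^[(j:ℕ)+1] (u k) - u k‖) =
          (fun m => ‖T^[m + ((j:ℕ)+1)] x - T^[m] x‖) ∘ φ := by
        funext k
        show ‖T^[(j:ℕ)+1] (T^[φ k] x) - T^[φ k] x‖ = ‖T^[φ k + ((j:ℕ)+1)] x - T^[φ k] x‖
        rw [Nat.add_comm (φ k) ((j:ℕ)+1), Function.iterate_add_apply T ((j:ℕ)+1) (φ k) x]
      rw [heq]
      exact h1
    have hc : Tendsto c atTop (𝓝 0) := by
      have := tendsto_finset_sum Finset.univ
        (fun (j : Fin n₀) _ => (hterm j).const_mul (α j))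
      simpa [hcdef] using this
    have hptwise : ∀ k, ∑ j : Fin n₀, α j * ‖u k - T^[(j:ℕ)+1] y‖ ≤ ‖u k - y‖ + c k := by
      intro k
      have h1 := hne (u k) (huC k) y hyC
      have h2 : ∑ j : Fin n₀, α j * ‖u k - T^[(j:ℕ)+1] y‖ ≤
          ∑ j : Fin n₀, (α j * ‖T^[(j:ℕ)+1] (u k) - T^[(j:ℕ)+1] y‖ +
            α j * ‖T^[(j:ℕ)+1] (u k) - u k‖) := by
        apply Finset.sum_le_sum
        intro j _
        rw [← mul_add]
        apply mul_le_mul_of_nonneg_left _ (hα_nonneg j)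
        have he : u k - T^[(j:ℕ)+1] y =
            (T^[(j:ℕ)+1] (u k) - T^[(j:ℕ)+1] y) - (T^[(j:ℕ)+1] (u k) - u k) := by abel
        rw [he]
        exact norm_sub_le _ _
      rw [Finset.sum_add_distrib] at h2
      exact h2.trans (add_le_add_left h1 _)
    set F : Fin n₀ → ℕ → ℝ := fun j k => α j * ‖u k - T^[(j:ℕ)+1] y‖ with hF
    have h0F : ∀ j k, 0 ≤ F j k := fun j k => mul_nonneg (hα_nonneg j) (norm_nonneg _)
    have hBF : ∀ j, ∃ B, ∀ k, F j k ≤ B := fun j =>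
      ⟨α j * (M + ‖T^[(j:ℕ)+1] y‖),
        fun k => mul_le_mul_of_nonneg_left (hwB _ k) (hα_nonneg j)⟩
    obtain ⟨⟨BS, hBS⟩, hsuper⟩ := sum_liminf_le_liminf_sum Finset.univ F h0F hBF
    have hmulj : ∀ j : Fin n₀, α j * r (T^[(j:ℕ)+1] y) ≤
        Filter.liminf (fun k => F j k) Filter.atTop := by
      intro j
      have h1 := le_liminf_mul (f := atTop) (u := fun _ => α j)
        (v := fun k => ‖u k - T^[(j:ℕ)+1] y‖)
        (Eventually.of_forall fun _ => hα_nonneg j)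
        (isBoundedUnder_of ⟨α j, fun _ => le_rfl⟩)
        (Eventually.of_forall fun _ => norm_nonneg _)
        ((isBoundedUnder_of ⟨M + ‖T^[(j:ℕ)+1] y‖, hwB _⟩ :
          Filter.IsBoundedUnder (· ≤ ·) Filter.atTop _).isCoboundedUnder_ge)
      rw [Filter.liminf_const] at h1
      exact h1
    have key1 : ∑ j : Fin n₀, α j * r (T^[(j:ℕ)+1] y) ≤
        Filter.liminf (fun k => ∑ j : Fin n₀, F j k) Filter.atTop :=
      (Finset.sum_le_sum fun j _ => hmulj j).trans hsuper
    have key2 : ∀ ε : ℝ, 0 < ε →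
        Filter.liminf (fun k => ∑ j : Fin n₀, F j k) Filter.atTop ≤ r y + ε := by
      intro ε hε
      have hev : ∀ᶠ k in atTop, ∑ j : Fin n₀, F j k ≤ ‖u k - y‖ + ε := by
        filter_upwards [hc.eventually_lt_const hε] with k hk
        exact (hptwise k).trans (by linarith)
      have h1 : Filter.liminf (fun k => ∑ j : Fin n₀, F j k) Filter.atTop ≤
          Filter.liminf (fun k => ‖u k - y‖ + ε) Filter.atTop := by
        exact Filter.liminf_le_liminf hev
          (isBoundedUnder_of ⟨0, fun k => Finset.sum_nonneg fun j _ => h0F j k⟩)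
          ((isBoundedUnder_of ⟨M + ‖y‖ + ε, fun k =>
            add_le_add_left (hwB y k) ε⟩ :
            Filter.IsBoundedUnder (· ≤ ·) Filter.atTop _).isCoboundedUnder_ge)
      have h2 : Filter.liminf (fun k => ‖u k - y‖ + ε) Filter.atTop ≤ ε + r y := by
        have h3 := liminf_add_le (f := atTop) (u := fun _ : ℕ => ε)
          (v := fun k => ‖u k - y‖)
          (isBoundedUnder_of ⟨ε, fun _ => le_rfl⟩)
          (isBoundedUnder_of ⟨ε, fun _ => le_rfl⟩)
          (isBoundedUnder_of ⟨0, fun k => norm_nonneg _⟩)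
          ((isBoundedUnder_of ⟨M + ‖y‖, hwB y⟩ :
            Filter.IsBoundedUnder (· ≤ ·) Filter.atTop _).isCoboundedUnder_ge)
        rw [Filter.limsup_const] at h3
        have heq : ((fun _ : ℕ => ε) + fun k => ‖u k - y‖) = fun k => ‖u k - y‖ + ε := by
          funext k; simp [add_comm]
        rw [heq] at h3
        exact h3
      calc Filter.liminf (fun k => ∑ j : Fin n₀, F j k) Filter.atTop ≤ _ := h1
        _ ≤ ε + r y := h2
        _ = r y + ε := by ring
    have key : ∑ j : Fin n₀, α j * r (T^[(j:ℕ)+1] y) ≤ r y := by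
      by_contra hcon
      push_neg at hcon
      have hε : (0:ℝ) < (∑ j : Fin n₀, α j * r (T^[(j:ℕ)+1] y) - r y) / 2 := by linarith
      have := key1.trans (key2 _ hε)
      linarith
    have hsum_lt : r y < ∑ j : Fin n₀, α j * r (T^[(j:ℕ)+1] y) := by
      have hry : r y = ∑ j : Fin n₀, α j * r y := by
        rw [← Finset.sum_mul, hα_sum, one_mul]
      rw [hry]
      apply Finset.sum_lt_sum
      · intro j _
        exact mul_le_mul_of_nonneg_left (hge j) (hα_nonneg j)
      · exact ⟨⟨0, hn₀⟩, Finset.mem_univ _, mul_lt_mul_of_pos_left h0lt hα_first⟩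
    linarith
  have hfixn : ∀ m : ℕ, T^[m] y = y := fun m => Function.iterate_fixed hfixed m
  -- Step 2: construct the monotone auxiliary sequence
  set a : ℕ → ℝ := fun n => ‖T^[n] x - y‖ with hadef
  have ha0 : ∀ n, 0 ≤ a n := fun n => norm_nonneg _
  have hdiff : ∀ k : ℕ, Tendsto (fun n => a (n + k) - a n) atTop (𝓝 0) := by
    intro k
    apply squeeze_zero_norm _ (hD k)
    intro n
    have h1 : |a (n + k) - a n| ≤ ‖T^[n + k] x - T^[n] x‖ := by
      have := abs_norm_sub_norm_le (T^[n + k] x - y) (T^[n] x - y)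
      simpa [hadef, sub_sub_sub_cancel_right] using this
    simpa [Real.norm_eq_abs] using h1
  set A : ℕ → ℝ := fun j => if h : j < n₀ then α ⟨j, h⟩ else 0 with hAdef
  have hA0 : ∀ j, 0 ≤ A j := by
    intro j
    rw [hAdef]
    dsimp only
    split
    · exact hα_nonneg _
    · exact le_rfl
  have hAfin : ∀ j : Fin n₀, A (j : ℕ) = α j := by
    intro j
    rw [hAdef]
    simp [j.isLt]
  have hrec : ∀ n, ∑ k ∈ Finset.range n₀, A k * a (n + k + 1) ≤ a n := by
    intro n
    have h1 := hne (T^[n] x) (hmem n) y hyC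
    have h2 : ∀ j : Fin n₀,
        α j * ‖T^[(j:ℕ)+1] (T^[n] x) - T^[(j:ℕ)+1] y‖ = A (j:ℕ) * a (n + (j:ℕ) + 1) := by
      intro j
      rw [hfixn, ← Function.iterate_add_apply, hAfin]
      have h3 : (j:ℕ) + 1 + n = n + (j:ℕ) + 1 := by omega
      rw [h3]
    calc ∑ k ∈ Finset.range n₀, A k * a (n + k + 1)
        = ∑ j : Fin n₀, A (j:ℕ) * a (n + (j:ℕ) + 1) :=
          (Fin.sum_univ_eq_sum_range (fun k => A k * a (n + k + 1)) n₀).symm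
      _ = ∑ j : Fin n₀, α j * ‖T^[(j:ℕ)+1] (T^[n] x) - T^[(j:ℕ)+1] y‖ :=
          Finset.sum_congr rfl fun j _ => (h2 j).symm
      _ ≤ a n := h1
  set β : ℕ → ℝ := fun k => ∑ j ∈ Finset.Ico k n₀, A j with hβdef
  have hβ0 : ∀ k, 0 ≤ β k := fun k => Finset.sum_nonneg fun j _ => hA0 j
  have hAsum : ∑ k ∈ Finset.range n₀, A k = 1 := by
    rw [← Fin.sum_univ_eq_sum_range (fun k => A k) n₀, ← hα_sum]
    exact Finset.sum_congr rfl fun j _ => hAfin j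
  have hβzero : β 0 = 1 := by
    rw [hβdef]
    dsimp only
    rw [← Finset.range_eq_Ico]
    exact hAsum
  have hβtop : β n₀ = 0 := by simp [hβdef]
  have hβrec : ∀ k, β k = A k + β (k + 1) := by
    intro k
    by_cases hk : k < n₀
    · rw [hβdef]
      dsimp only
      rw [Finset.sum_eq_sum_Ico_succ_bot hk]
    · have h1 : Finset.Ico k n₀ = ∅ := Finset.Ico_eq_empty (by omega)
      have h2 : Finset.Ico (k+1) n₀ = ∅ := Finset.Ico_eq_empty (by omega)
      have h3 : A k = 0 := by rw [hAdef]; simp [hk]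
      simp [hβdef, h1, h2, h3]
  set c : ℕ → ℝ := fun n => ∑ k ∈ Finset.range n₀, β k * a (n + k) with hcdef
  have hc0 : ∀ n, 0 ≤ c n := fun n =>
    Finset.sum_nonneg fun k _ => mul_nonneg (hβ0 k) (ha0 _)
  have hmono : ∀ n, c (n + 1) ≤ c n := by
    intro n
    have e1 : c (n + 1) = ∑ k ∈ Finset.range n₀, A k * a (n + k + 1) +
        ∑ k ∈ Finset.range n₀, β (k + 1) * a (n + k + 1) := by
      rw [hcdef]
      dsimp only
      rw [← Finset.sum_add_distrib]
      apply Finset.sum_congr rfl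
      intro k _
      have h4 : n + 1 + k = n + k + 1 := by omega
      rw [h4, hβrec k, add_mul]
    have e2 : ∑ k ∈ Finset.range n₀, β (k + 1) * a (n + k + 1) = c n - a n := by
      have h3 := Finset.sum_range_succ' (fun i => β i * a (n + i)) n₀
      have h4 : ∑ i ∈ Finset.range (n₀ + 1), β i * a (n + i) = c n := by
        rw [Finset.sum_range_succ, hβtop, hcdef]
        simp
      rw [h4] at h3
      have h5 : ∀ k : ℕ, β (k + 1) * a (n + (k + 1)) = β (k + 1) * a (n + k + 1) :=
        fun k => rfl
      rw [Finset.sum_congr rfl (fun k _ => h5 k)] at h3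
      rw [hβzero] at h3
      simp only [one_mul, Nat.add_zero] at h3
      linarith
    rw [e1, e2]
    have h5 := hrec n
    linarith
  have hantitone : Antitone c := antitone_nat_of_succ_le hmono
  have hbdd : BddBelow (Set.range c) := by
    refine ⟨0, ?_⟩
    rintro z ⟨n, rfl⟩
    exact hc0 n
  have hclim : Tendsto c atTop (𝓝 (⨅ n, c n)) := tendsto_atTop_ciInf hantitone hbdd
  set B : ℝ := ∑ k ∈ Finset.range n₀, β k with hBdef
  have hB1 : 1 ≤ B := by
    have := Finset.single_le_sum (f := β) (fun k _ => hβ0 k) (Finset.mem_range.2 hn₀)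
    rw [hβzero] at this
    exact this
  have hBpos : 0 < B := lt_of_lt_of_le one_pos hB1
  have he : Tendsto (fun n => c n - B * a n) atTop (𝓝 0) := by
    have heq : (fun n => c n - B * a n) =
        fun n => ∑ k ∈ Finset.range n₀, β k * (a (n + k) - a n) := by
      funext n
      rw [hcdef, hBdef]
      dsimp only
      rw [Finset.sum_mul, ← Finset.sum_sub_distrib]
      apply Finset.sum_congr rfl
      intro k _
      ring
    rw [heq]
    have := tendsto_finset_sum (Finset.range n₀)
      (fun k (_ : k ∈ Finset.range n₀) => (hdiff k).const_mul (β k))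
    simpa using this
  refine ⟨(⨅ n, c n) / B, ?_⟩
  have hfin : Tendsto (fun n => (c n - (c n - B * a n)) / B) atTop
      (𝓝 (((⨅ n, c n) - 0) / B)) := (hclim.sub he).div_const B
  have heq2 : (fun n => (c n - (c n - B * a n)) / B) = a := by
    funext n
    field_simp
    ring
  rw [heq2, sub_zero] at hfin
  exact hfin
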